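/- Let X be a locally convex topological vector space over 𝕂 (𝕂 = ℝ or ℂ) that is a G-space and supports a hypercyclic continuous linear operator T₀. Then every countable dense linearly independent subset A of X is an orbit: there exist a continuous linear operator T on X and x ∈ X with A = {Tⁿx : n ≥ 0}. -/

import Mathlib

noncomputable section

open Set Submodule

section Aux

variable {𝕜 : Type*} [RCLike 𝕜] {Y : Type*} [AddCommGroup Y] [Module 𝕜 Y]

lemma range_fin_eq_image (v : ℕ → Y) (k : ℕ) :
    Set.range (fun i : Fin k => v (i : ℕ)) = v '' Set.Iio k := by
  ext z
  constructor
  · rintro ⟨i, rfl⟩; exact ⟨i, i.isLt, rfl⟩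
  · rintro ⟨m, hm, rfl⟩; exact ⟨⟨m, hm⟩, rfl⟩

lemma orbit_trapped (S : Y →ₗ[𝕜] Y) (y : Y) (k : ℕ)
    (hk : (S ^ k) y ∈ span 𝕜 ((fun n : ℕ => (S ^ n) y) '' Set.Iio k)) :
    ∀ m : ℕ, (S ^ m) y ∈ span 𝕜 ((fun n : ℕ => (S ^ n) y) '' Set.Iio k) := by
  set v : ℕ → Y := fun n => (S ^ n) y with hv
  set W := span 𝕜 (v '' Set.Iio k) with hW
  have hsucc : ∀ n : ℕ, S (v n) = v (n + 1) := by
    intro n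
    simp only [hv, ← Module.End.mul_apply, ← pow_succ']
  have hstep : Submodule.map S W ≤ W := by
    rw [hW, Submodule.map_span]
    apply span_le.2
    rintro _ ⟨_, ⟨n, hn, rfl⟩, rfl⟩
    rw [hsucc n]
    rcases lt_or_eq_of_le (Nat.succ_le_of_lt hn) with h | h
    · exact subset_span ⟨n + 1, h, rfl⟩
    · rw [show n + 1 = k from h]; exact hk
  have hstep' : ∀ z ∈ W, S z ∈ W := fun z hz => hstep ⟨z, hz, rfl⟩
  intro m
  induction m with
  | zero =>
    rcases Nat.eq_zero_or_pos k with h | h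
    · rw [h] at hk; exact hk
    · exact subset_span ⟨0, h, rfl⟩
  | succ m ih =>
    have : (S ^ (m + 1)) y = S (v m) := (hsucc m).symm
    rw [this]
    exact hstep' _ ih

lemma orbit_prefix_li (S : Y →ₗ[𝕜] Y) (y : Y)
    (h : ∀ k : ℕ, (S ^ k) y ∉ span 𝕜 ((fun n : ℕ => (S ^ n) y) '' Set.Iio k)) :
    ∀ n : ℕ, LinearIndependent 𝕜 (fun i : Fin n => (S ^ (i : ℕ)) y) := by
  intro n
  induction n with
  | zero => exact linearIndependent_empty_type
  | succ n ih =>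
    have hsnoc : (fun i : Fin (n + 1) => (S ^ (i : ℕ)) y)
        = Fin.snoc (fun i : Fin n => (S ^ (i : ℕ)) y) ((S ^ n) y) := by
      funext i
      refine Fin.lastCases ?_ ?_ i
      · simp [Fin.snoc_last]
      · intro j; simp [Fin.snoc_castSucc]
    rw [hsnoc, linearIndependent_fin_snoc]
    refine ⟨ih, ?_⟩
    rw [range_fin_eq_image (fun n : ℕ => (S ^ n) y) n]
    exact h n

lemma orbit_injective (S : Y →ₗ[𝕜] Y) (y : Y)
    (h : ∀ k : ℕ, (S ^ k) y ∉ span 𝕜 ((fun n : ℕ => (S ^ n) y) '' Set.Iio k)) :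
    Function.Injective (fun n : ℕ => (S ^ n) y) := by
  have key : ∀ a b : ℕ, a < b → (S ^ a) y ≠ (S ^ b) y := by
    intro a b hab hEq
    have hEq : (fun n : ℕ => (S ^ n) y) a = (S ^ b) y := hEq
    exact h b (subset_span ⟨a, hab, hEq⟩)
  intro a b hab
  rcases lt_trichotomy a b with h' | h' | h'
  · exact absurd hab (key a b h')
  · exact h'
  · exact absurd hab.symm (key b a h')

lemma orbit_set_li (S : Y →ₗ[𝕜] Y) (y : Y)
    (h : ∀ k : ℕ, (S ^ k) y ∉ span 𝕜 ((fun n : ℕ => (S ^ n) y) '' Set.Iio k)) :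
    LinearIndependent 𝕜 ((↑) : Set.range (fun n : ℕ => (S ^ n) y) → Y) := by
  have hUnion : Set.range (fun n : ℕ => (S ^ n) y)
      = ⋃ n : ℕ, ((fun m : ℕ => (S ^ m) y) '' Set.Iio n) := by
    ext z
    constructor
    · rintro ⟨n, rfl⟩; exact Set.mem_iUnion.2 ⟨n + 1, ⟨n, Nat.lt_succ_self n, rfl⟩⟩
    · rintro hz
      obtain ⟨n, m, _, rfl⟩ := Set.mem_iUnion.1 hz
      exact ⟨m, rfl⟩
  rw [hUnion]
  apply linearIndepOn_iUnion_of_directed (v := id)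
  · intro a b
    exact ⟨max a b, Set.image_mono (fun x hx => lt_of_lt_of_le hx (le_max_left a b)),
      Set.image_mono (fun x hx => lt_of_lt_of_le hx (le_max_right a b))⟩
  · intro n
    have := (orbit_prefix_li S y h n).linearIndepOn_id
    rwa [range_fin_eq_image (fun n : ℕ => (S ^ n) y) n] at this

end Aux
section NoDenseOrbit

variable {𝕜 : Type*} [RCLike 𝕜]

lemma no_dense_orbit {E : Type*} [NormedAddCommGroup E] [NormedSpace 𝕜 E]
    [FiniteDimensional 𝕜 E] [Nontrivial E] (S : E →ₗ[𝕜] E) (y : E) :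
    ¬ Dense (Set.range fun n : ℕ => (S ^ n) y) := by
  classical
  intro hdense
  set d := Module.finrank 𝕜 E with hd
  have hdpos : 0 < d := Module.finrank_pos
  set v : ℕ → E := fun n => (S ^ n) y with hv
  have hsucc : ∀ n : ℕ, S (v n) = v (n + 1) := by
    intro n
    simp only [hv, ← Module.End.mul_apply, ← pow_succ']
  -- Step 1 : the first `d` iterates are linearly independent
  have hind : LinearIndependent 𝕜 (fun i : Fin d => v (i : ℕ)) := by
    by_contra hnd
    have hex : ∃ n, ¬ LinearIndependent 𝕜 (fun i : Fin n => v (i : ℕ)) := ⟨d, hnd⟩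
    set n := Nat.find hex with hn
    have hnle : n ≤ d := Nat.find_le hnd
    have hfail : ¬ LinearIndependent 𝕜 (fun i : Fin n => v (i : ℕ)) := Nat.find_spec hex
    have hnpos : 0 < n := by
      rcases Nat.eq_zero_or_pos n with h | h
      · exfalso; rw [h] at hfail; exact hfail linearIndependent_empty_type
      · exact h
    obtain ⟨k, hkn⟩ : ∃ k, n = k + 1 := ⟨n - 1, (Nat.succ_pred_eq_of_pos hnpos).symm⟩
    have hkd : k < d := by omega
    have hk : LinearIndependent 𝕜 (fun i : Fin k => v (i : ℕ)) := by
      by_contra hc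
      have h5 : n ≤ k := hn ▸ Nat.find_le hc
      omega
    have hmem : v k ∈ span 𝕜 (Set.range fun i : Fin k => v (i : ℕ)) := by
      by_contra hmem
      apply hfail
      rw [hkn]
      have hsnoc : (fun i : Fin (k + 1) => v (i : ℕ))
          = Fin.snoc (fun i : Fin k => v (i : ℕ)) (v k) := by
        funext i
        refine Fin.lastCases ?_ ?_ i
        · simp [Fin.snoc_last]
        · intro j; simp [Fin.snoc_castSucc]
      rw [hsnoc, linearIndependent_fin_snoc]
      exact ⟨hk, hmem⟩
    rw [range_fin_eq_image v k] at hmem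
    have htrap := orbit_trapped S y k hmem
    set W := span 𝕜 (v '' Set.Iio k) with hW
    haveI : FiniteDimensional 𝕜 W :=
      FiniteDimensional.span_of_finite 𝕜 ((Set.finite_Iio k).image v)
    have hclosed : IsClosed (W : Set E) := W.closed_of_finiteDimensional
    have hsub : Set.range v ⊆ (W : Set E) := by
      rintro _ ⟨m, rfl⟩; exact htrap m
    have hWuniv : (W : Set E) = Set.univ := by
      apply Set.eq_univ_of_univ_subset
      rw [← hdense.closure_eq]
      exact hclosed.closure_subset_iff.2 hsub
    have hWtop : W = ⊤ := SetLike.coe_injective (by rw [hWuniv, Submodule.top_coe])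
    -- finrank bound
    set s : Finset E := Finset.image (fun i : Fin k => v (i : ℕ)) Finset.univ with hs
    have h1 : Module.finrank 𝕜 ↥(span 𝕜 (s : Set E)) ≤ s.card :=
      finrank_span_finset_le_card s
    have hscoe : (s : Set E) = v '' Set.Iio k := by
      rw [hs, Finset.coe_image, Finset.coe_univ, Set.image_univ, range_fin_eq_image v k]
    have h2 : s.card ≤ k := (Finset.card_image_le).trans (by simp)
    rw [hscoe, ← hW, hWtop] at h1
    have h3 : Module.finrank 𝕜 ↥(⊤ : Submodule 𝕜 E) = d := finrank_top 𝕜 E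
    omega
  -- Step 2 : determinant function
  haveI : Nonempty (Fin d) := ⟨⟨0, hdpos⟩⟩
  set c : Module.Basis (Fin d) 𝕜 E :=
    basisOfLinearIndependentOfCardEqFinrank hind (by simp [hd]) with hc
  have hcc : ⇑c = fun i : Fin d => v (i : ℕ) :=
    coe_basisOfLinearIndependentOfCardEqFinrank hind _
  set F : E → 𝕜 := fun x => c.det (fun i : Fin d => (S ^ (i : ℕ)) x) with hF
  have hFcont : Continuous F := by
    have hFeq : F = fun x =>
        Matrix.det (Matrix.of fun i j : Fin d => (c.coord i) ((S ^ (j : ℕ)) x)) := by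
      funext x
      show c.det (fun i : Fin d => (S ^ (i : ℕ)) x)
          = Matrix.det (Matrix.of fun i j : Fin d => (c.coord i) ((S ^ (j : ℕ)) x))
      rw [Module.Basis.det_apply]
      congr 1
    rw [hFeq]
    apply Continuous.matrix_det
    apply continuous_matrix
    intro i j
    exact ((c.coord i).comp (S ^ (j : ℕ))).continuous_of_finiteDimensional
  have hFy : F y = 1 := by
    have : F y = c.det ⇑c := by
      rw [hF, hcc]
    rw [this, Module.Basis.det_self]
  have hmul : ∀ x, F (S x) = LinearMap.det S * F x := by
    intro x
    have htuple : (fun i : Fin d => (S ^ (i : ℕ)) (S x))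
        = ⇑S ∘ (fun i : Fin d => (S ^ (i : ℕ)) x) := by
      funext i
      simp only [Function.comp_apply, ← Module.End.mul_apply, ← pow_succ, ← pow_succ']
    rw [hF]
    simp only [htuple]
    rw [Module.Basis.det_comp]
  have hFn : ∀ n : ℕ, F (v n) = (LinearMap.det S) ^ n := by
    intro n
    induction n with
    | zero => simpa [hv] using hFy
    | succ n ih =>
      rw [← hsucc n, hmul, ih, pow_succ]
      ring
  have hnormFn : ∀ n : ℕ, ‖F (v n)‖ = ‖LinearMap.det S‖ ^ n := by
    intro n; rw [hFn n, norm_pow]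
  rcases lt_or_ge ‖LinearMap.det S‖ 1 with hlt | hge
  · -- contracting determinant; find large n with `v n` close to `y`
    obtain ⟨n₀, hn₀⟩ := exists_pow_lt_of_lt_one (by norm_num : (0:ℝ) < 1/2) hlt
    set U : Set E := F ⁻¹' Metric.ball (F y) (1/2) with hU
    have hUopen : IsOpen U := (Metric.isOpen_ball).preimage hFcont
    have hyU : y ∈ U := by
      simp [hU, Metric.mem_ball]
    haveI : ∀ x : E, Filter.NeBot (nhdsWithin x {x}ᶜ) :=
      fun x => Module.punctured_nhds_neBot 𝕜 E x
    have hdd : Dense (Set.range v \ (v '' Set.Iic n₀)) :=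
      hdense.diff_finite ((Set.finite_Iic n₀).image v)
    obtain ⟨z, hzmem, hzU⟩ := hdd.exists_mem_open hUopen ⟨y, hyU⟩
    obtain ⟨⟨n, rfl⟩, hnot⟩ := hzmem
    have hngt : n₀ < n := by
      by_contra hcon
      exact hnot ⟨n, Set.mem_Iic.2 (by omega), rfl⟩
    have hlow : (1:ℝ)/2 < ‖F (v n)‖ := by
      have hdist : ‖F (v n) - F y‖ < 1/2 := by
        simpa [hU, Metric.mem_ball, dist_eq_norm] using hzU
      have h1 : ‖F y‖ = 1 := by rw [hFy]; simp
      have := norm_sub_norm_le (F (v n)) (F y)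
      have h2 : ‖F (v n)‖ ≥ ‖F y‖ - ‖F (v n) - F y‖ := by
        have := norm_sub_norm_le (F y) (F (v n))
        have h3 : ‖F y - F (v n)‖ = ‖F (v n) - F y‖ := norm_sub_rev _ _
        linarith
      linarith
    have hupper : ‖LinearMap.det S‖ ^ n ≤ ‖LinearMap.det S‖ ^ n₀ :=
      pow_le_pow_of_le_one (norm_nonneg _) hlt.le hngt.le
    rw [hnormFn n] at hlow
    linarith
  · -- expanding determinant; find n with `v n` close to `0`
    set U : Set E := F ⁻¹' Metric.ball 0 1 with hU
    have hUopen : IsOpen U := (Metric.isOpen_ball).preimage hFcont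
    have hF0 : F 0 = 0 := by
      show c.det (fun i : Fin d => (S ^ (i : ℕ)) (0 : E)) = 0
      have : (fun i : Fin d => (S ^ (i : ℕ)) (0 : E)) = fun _ : Fin d => (0 : E) := by
        funext i; simp
      rw [this]
      exact c.det.toMultilinearMap.map_coord_zero ⟨0, hdpos⟩ rfl
    have h0U : (0 : E) ∈ U := by simp [hU, Metric.mem_ball, hF0]
    obtain ⟨z, hzmem, hzU⟩ := hdense.exists_mem_open hUopen ⟨0, h0U⟩
    obtain ⟨n, rfl⟩ := hzmem
    have h1 : ‖F (v n)‖ < 1 := by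
      simpa [hU, Metric.mem_ball, dist_eq_norm] using hzU
    have h2 : (1:ℝ) ≤ ‖LinearMap.det S‖ ^ n := one_le_pow₀ hge
    rw [hnormFn n] at h1
    linarith

end NoDenseOrbit
/-- `A` belongs to `Σ(X)`: `A` is a countable (infinite) dense linearly independent
subset of `X`. -/
def MemSigma (𝕜 : Type*) [RCLike 𝕜] {X : Type*} [AddCommGroup X] [Module 𝕜 X]
    [TopologicalSpace X] (A : Set X) : Prop :=
  A.Countable ∧ A.Infinite ∧ Dense A ∧ LinearIndependent 𝕜 ((↑) : A → X)

section Indiscrete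

variable {𝕜 : Type*} [RCLike 𝕜]

lemma exists_orbit_of_indiscrete {X : Type*} [AddCommGroup X] [Module 𝕜 X]
    [TopologicalSpace X] [IsTopologicalAddGroup X]
    (hD : Dense ({0} : Set X)) (A : Set X) (hA : MemSigma 𝕜 A) :
    ∃ (T : X →L[𝕜] X) (x : X), A = Set.range (fun n : ℕ => (T ^ n) x) := by
  classical
  obtain ⟨hAc, hAinf, _, hAli⟩ : _ ∧ _ ∧ _ ∧ LinearIndepOn 𝕜 id A := hA
  have hopen : ∀ U : Set X, IsOpen U → U.Nonempty → U = Set.univ := by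
    rintro U hU ⟨x, hx⟩
    refine Set.eq_univ_iff_forall.2 fun z => ?_
    have hV : IsOpen ((· + z) ⁻¹' U) := hU.preimage (continuous_id.add continuous_const)
    have hVne : ((· + z) ⁻¹' U).Nonempty := ⟨x - z, by simpa using hx⟩
    obtain ⟨w, hw1, hw2⟩ := hD.inter_open_nonempty _ hV hVne
    have hw0 : w = 0 := hw2
    rw [hw0] at hw1
    simpa using hw1
  have hcont : ∀ f : X → X, Continuous f := by
    intro f
    rw [continuous_def]
    intro U hU
    rcases Set.eq_empty_or_nonempty U with rfl | hne
    · simp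
    · rw [hopen U hU hne]
      simp
  haveI : Countable ↥A := hAc.to_subtype
  haveI : Infinite ↥A := hAinf.to_subtype
  obtain ⟨e⟩ : Nonempty (ℕ ≃ ↥A) := nonempty_equiv_of_countable
  set f : ℕ → X := fun n => (e n : X) with hf
  have hfA : Set.range f = A := by
    have h1 : Set.range f = Set.range ((↑) : ↥A → X) := e.surjective.range_comp _
    rw [h1, Subtype.range_coe]
  set s := hAli.extend (Set.subset_univ A) with hs
  set B : Module.Basis ↥s 𝕜 X := Module.Basis.extend hAli with hB
  have hsub : A ⊆ s := hAli.subset_extend _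
  set g : ↥s → X := fun i => if h : (i : X) ∈ A then f (e.symm ⟨(i : X), h⟩ + 1) else 0 with hg
  set T₁ : X →ₗ[𝕜] X := B.constr 𝕜 g with hT₁
  have hT : ∀ n : ℕ, T₁ (f n) = f (n + 1) := by
    intro n
    have hfnA : f n ∈ A := hfA ▸ Set.mem_range_self n
    have hmem : f n ∈ s := hsub hfnA
    have hBi : B ⟨f n, hmem⟩ = f n := Module.Basis.extend_apply_self hAli ⟨f n, hmem⟩
    have hcb := B.constr_basis 𝕜 g ⟨f n, hmem⟩
    rw [hBi] at hcb
    rw [hT₁, hcb, hg]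
    simp only
    rw [dif_pos hfnA]
    congr 1
    have h2 : (⟨f n, hfnA⟩ : ↥A) = e n := Subtype.ext rfl
    rw [h2, e.symm_apply_apply]
  refine ⟨⟨T₁, hcont T₁⟩, f 0, ?_⟩
  have horb : ∀ n : ℕ, ((⟨T₁, hcont T₁⟩ : X →L[𝕜] X) ^ n) (f 0) = f n := by
    intro n
    induction n with
    | zero => simp
    | succ n ih =>
      rw [pow_succ', ContinuousLinearMap.mul_apply, ih]
      exact hT n
  have hfun : (fun n : ℕ => ((⟨T₁, hcont T₁⟩ : X →L[𝕜] X) ^ n) (f 0)) = f := funext horb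
  rw [hfun, hfA]

end Indiscrete

/-- If a locally convex space `X` is a G-space (`Σ(X)` is nonempty and
`GL(X)` acts transitively on it) and supports a hypercyclic operator, then every member
of `Σ(X)` is an orbit of a continuous linear operator. -/
theorem orbit_of_gspace_with_hypercyclic
    (𝕜 : Type*) [RCLike 𝕜] (X : Type*) [AddCommGroup X] [Module 𝕜 X]
    [Module ℝ X] [IsScalarTower ℝ 𝕜 X]
    -- X is a locally convex TVS
    [TopologicalSpace X] [IsTopologicalAddGroup X] [ContinuousSMul 𝕜 X]
    [LocallyConvexSpace ℝ X]
    -- X is a G-space : Σ(X) ≠ ∅ and GL(X) acts transitively on Σ(X)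
    (hne : ∃ A : Set X, MemSigma 𝕜 A)
    (htrans : ∀ A B : Set X, MemSigma 𝕜 A → MemSigma 𝕜 B →
      ∃ J : X ≃L[𝕜] X, J '' A = B)
    -- X supports a hypercyclic operator T₀
    (hhyp : ∃ (T₀ : X →L[𝕜] X) (x₀ : X), Dense (Set.range (fun n : ℕ => (T₀ ^ n) x₀))) :
    ∀ A : Set X, MemSigma 𝕜 A →
      ∃ (T : X →L[𝕜] X) (x : X), A = Set.range (fun n : ℕ => (T ^ n) x) := by
  intro A hA
  classical
  obtain ⟨T₀, x₀, hd0⟩ := hhyp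
  set L : X →ₗ[𝕜] X := (T₀ : X →ₗ[𝕜] X) with hL
  have hcoe : ∀ (n : ℕ) (z : X), (T₀ ^ n) z = (L ^ n) z := by
    intro n
    induction n with
    | zero => intro z; simp
    | succ n ih =>
      intro z
      rw [pow_succ, ContinuousLinearMap.mul_apply, ih (T₀ z), pow_succ, Module.End.mul_apply]
      rfl
  have hdense : Dense (Set.range fun n : ℕ => (L ^ n) x₀) := by
    have h1 : (fun n : ℕ => (L ^ n) x₀) = fun n : ℕ => (T₀ ^ n) x₀ := by
      funext n; rw [hcoe]
    rw [h1]; exact hd0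
  by_cases hli : ∀ k : ℕ, (L ^ k) x₀ ∉ span 𝕜 ((fun n : ℕ => (L ^ n) x₀) '' Set.Iio k)
  · -- the orbit is a member of `Σ(X)`; transfer it to `A` by transitivity
    set O := Set.range (fun n : ℕ => (L ^ n) x₀) with hO
    have hOmem : MemSigma 𝕜 O :=
      ⟨Set.countable_range _, Set.infinite_range_of_injective (orbit_injective L x₀ hli),
        hdense, orbit_set_li L x₀ hli⟩
    obtain ⟨J, hJ⟩ := htrans O A hOmem hA
    set T : X →L[𝕜] X := (J : X →L[𝕜] X).comp (T₀.comp (J.symm : X →L[𝕜] X)) with hT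
    refine ⟨T, J x₀, ?_⟩
    have hconj : ∀ n : ℕ, ∀ z : X, (T ^ n) (J z) = J ((T₀ ^ n) z) := by
      intro n
      induction n with
      | zero => intro z; simp
      | succ n ih =>
        intro z
        have h1 : T (J z) = J (T₀ z) := by
          rw [hT]; simp
        have h3 : (T₀ ^ (n + 1)) z = (T₀ ^ n) (T₀ z) := by
          rw [pow_succ, ContinuousLinearMap.mul_apply]
        rw [pow_succ, ContinuousLinearMap.mul_apply, h1, ih (T₀ z), h3]
    have h2 : (fun n : ℕ => (T ^ n) (J x₀)) = (J : X → X) ∘ (fun n : ℕ => (L ^ n) x₀) := by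
      funext n
      rw [hconj n x₀, Function.comp_apply, hcoe]
    rw [h2, Set.range_comp, ← hO]
    exact hJ.symm
  · push_neg at hli
    obtain ⟨k, hk⟩ := hli
    by_cases hI : Dense ({0} : Set X)
    · exact exists_orbit_of_indiscrete hI A hA
    · exfalso
      have htrap := orbit_trapped L x₀ k hk
      set N : Submodule 𝕜 X := (⊥ : Submodule 𝕜 X).topologicalClosure with hN
      have hNset : (N : Set X) = closure ({0} : Set X) := by
        rw [hN, Submodule.topologicalClosure_coe, Submodule.bot_coe]
      haveI hNcl : IsClosed ((N : Set X)) := Submodule.isClosed_topologicalClosure _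
      haveI : T3Space (X ⧸ N) := Submodule.t3_quotient_of_isClosed N
      set π : X →ₗ[𝕜] X ⧸ N := N.mkQ with hπ
      have hπcont : Continuous π := N.isOpenQuotientMap_mkQ.continuous
      have hπsurj : Function.Surjective π := N.mkQ_surjective
      have hLN : N ≤ N.comap L := by
        intro x hx
        rw [Submodule.mem_comap, ← SetLike.mem_coe, hNset]
        have hx' : x ∈ closure ({0} : Set X) := by
          rw [← hNset]; exact hx
        exact map_mem_closure T₀.continuous hx' (fun z hz => by simp_all)
      set SQ : X ⧸ N →ₗ[𝕜] X ⧸ N := N.mapQ N L hLN with hSQ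
      have hπL : ∀ z : X, SQ (π z) = π (L z) := by
        intro z
        rw [hπ, Submodule.mkQ_apply, hSQ, Submodule.mapQ_apply, Submodule.mkQ_apply]
      have hπorb : ∀ n : ℕ, π ((L ^ n) x₀) = (SQ ^ n) (π x₀) := by
        intro n
        induction n with
        | zero => simp
        | succ n ih =>
          have h1 : (L ^ (n + 1)) x₀ = L ((L ^ n) x₀) := by
            rw [pow_succ', Module.End.mul_apply]
          rw [h1, ← hπL, ih, ← Module.End.mul_apply, ← pow_succ']
      have hQdense : Dense (Set.range fun n : ℕ => (SQ ^ n) (π x₀)) := by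
        have h1 : (fun n : ℕ => (SQ ^ n) (π x₀)) = π ∘ (fun n : ℕ => (L ^ n) x₀) :=
          funext fun n => (hπorb n).symm
        rw [h1, Set.range_comp]
        exact hπsurj.denseRange.dense_image hπcont hdense
      set W := span 𝕜 ((fun n : ℕ => (L ^ n) x₀) '' Set.Iio k) with hW
      haveI : FiniteDimensional 𝕜 W :=
        FiniteDimensional.span_of_finite 𝕜 ((Set.finite_Iio k).image _)
      have hmapW : W.map π = span 𝕜 (π '' ((fun n : ℕ => (L ^ n) x₀) '' Set.Iio k)) :=
        Submodule.map_span π _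
      haveI : FiniteDimensional 𝕜 ↥(W.map π) := by
        rw [hmapW]
        exact FiniteDimensional.span_of_finite 𝕜 (((Set.finite_Iio k).image _).image _)
      have hclosedQ : IsClosed ((W.map π : Submodule 𝕜 (X ⧸ N)) : Set (X ⧸ N)) :=
        Submodule.closed_of_finiteDimensional _
      have hsubQ : Set.range (fun n : ℕ => (SQ ^ n) (π x₀)) ⊆ (W.map π : Set (X ⧸ N)) := by
        rintro _ ⟨n, rfl⟩
        exact ⟨(L ^ n) x₀, htrap n, hπorb n⟩
      have hWuniv : ((W.map π : Submodule 𝕜 (X ⧸ N)) : Set (X ⧸ N)) = Set.univ := by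
        apply Set.eq_univ_of_univ_subset
        rw [← hQdense.closure_eq]
        exact hclosedQ.closure_subset_iff.2 hsubQ
      have hWtop : W.map π = ⊤ := SetLike.coe_injective (by rw [hWuniv, Submodule.top_coe])
      haveI : FiniteDimensional 𝕜 (X ⧸ N) := by
        have hsurj2 : Function.Surjective (π.comp W.subtype) := by
          intro q
          have hq : q ∈ W.map π := hWtop ▸ Submodule.mem_top
          obtain ⟨w, hw, rfl⟩ := hq
          exact ⟨⟨w, hw⟩, rfl⟩
        exact Module.Finite.of_surjective (π.comp W.subtype) hsurj2
      haveI : Nontrivial (X ⧸ N) := by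
        have hex : ∃ x : X, x ∉ closure ({0} : Set X) := by
          by_contra hc
          push_neg at hc
          exact hI (dense_iff_closure_eq.mpr (Set.eq_univ_of_forall hc))
        obtain ⟨x, hx⟩ := hex
        refine ⟨⟨π x, 0, fun hEq => hx ?_⟩⟩
        rw [← hNset]
        exact (Submodule.Quotient.mk_eq_zero N).1 (by rw [← Submodule.mkQ_apply]; exact hEq)
      set d := Module.finrank 𝕜 (X ⧸ N) with hdq
      obtain ⟨ℓ⟩ := FiniteDimensional.nonempty_linearEquiv_of_finrank_eq
        (show Module.finrank 𝕜 (X ⧸ N) = Module.finrank 𝕜 (EuclideanSpace 𝕜 (Fin d))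
          from (finrank_euclideanSpace_fin).symm)
      haveI : Nontrivial (EuclideanSpace 𝕜 (Fin d)) := by
        obtain ⟨q1, q2, hq⟩ := exists_pair_ne (X ⧸ N)
        exact ⟨ℓ q1, ℓ q2, fun h => hq (ℓ.injective h)⟩
      set S' : EuclideanSpace 𝕜 (Fin d) →ₗ[𝕜] EuclideanSpace 𝕜 (Fin d) :=
        (ℓ : (X ⧸ N) →ₗ[𝕜] EuclideanSpace 𝕜 (Fin d)).comp
          (SQ.comp (ℓ.symm : EuclideanSpace 𝕜 (Fin d) →ₗ[𝕜] (X ⧸ N))) with hS'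
      have hS'app : ∀ q, S' (ℓ q) = ℓ (SQ q) := by
        intro q; rw [hS']; simp
      have horbE : ∀ n : ℕ, (S' ^ n) (ℓ (π x₀)) = ℓ ((SQ ^ n) (π x₀)) := by
        intro n
        induction n with
        | zero => simp
        | succ n ih =>
          rw [pow_succ', Module.End.mul_apply, ih, hS'app, ← Module.End.mul_apply, ← pow_succ']
      have hℓcont : Continuous ℓ :=
        (ℓ : (X ⧸ N) →ₗ[𝕜] EuclideanSpace 𝕜 (Fin d)).continuous_of_finiteDimensional
      have hdenseE : Dense (Set.range fun n : ℕ => (S' ^ n) (ℓ (π x₀))) := by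
        have h1 : (fun n : ℕ => (S' ^ n) (ℓ (π x₀))) = ℓ ∘ (fun n : ℕ => (SQ ^ n) (π x₀)) :=
          funext fun n => horbE n
        rw [h1, Set.range_comp]
        exact ℓ.surjective.denseRange.dense_image hℓcont hQdense
      exact no_dense_orbit S' (ℓ (π x₀)) hdenseE
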